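/- Let B be an n×m real matrix, R an m×m real symmetric positive definite matrix, and let M and X be n×n real symmetric positive semidefinite matrices. Then the matrix-valued function ε ↦ g(B,R, M + εX) is differentiable at ε = 0 and its derivative there equals H(B,R,M) · X · H(B,R,M)ᵀ, where H(B,R,M) := I − M B (Bᵀ M B + R)⁻¹ Bᵀ. -/

import Mathlib

open Matrix

-- Equip matrices with the Frobenius norm (differentiability does not depend on the
-- choice of norm in finite dimension).
attribute [local instance] Matrix.frobeniusNormedAddCommGroup Matrix.frobeniusNormedSpace

/-- The Riccati-type update `g(B,R,M) = M − M B (Bᵀ M B + R)⁻¹ Bᵀ M`. -/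
noncomputable def g {n m : ℕ} (B : Matrix (Fin n) (Fin m) ℝ)
    (R : Matrix (Fin m) (Fin m) ℝ) (M : Matrix (Fin n) (Fin n) ℝ) :
    Matrix (Fin n) (Fin n) ℝ :=
  M - M * B * (Bᵀ * M * B + R)⁻¹ * Bᵀ * M

/-- `H(B,R,M) = I − M B (Bᵀ M B + R)⁻¹ Bᵀ`. -/
noncomputable def H {n m : ℕ} (B : Matrix (Fin n) (Fin m) ℝ)
    (R : Matrix (Fin m) (Fin m) ℝ) (M : Matrix (Fin n) (Fin n) ℝ) :
    Matrix (Fin n) (Fin n) ℝ :=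
  1 - M * B * (Bᵀ * M * B + R)⁻¹ * Bᵀ

attribute [local instance] Matrix.frobeniusNormedRing Matrix.frobeniusNormedAlgebra

private lemma matMulLeft {p q r : ℕ} (A : Matrix (Fin p) (Fin q) ℝ)
    {f : ℝ → Matrix (Fin q) (Fin r) ℝ} {f' : Matrix (Fin q) (Fin r) ℝ} {x : ℝ}
    (hf : HasDerivAt f f' x) : HasDerivAt (fun t => A * f t) (A * f') x := by
  have hφ : IsLinearMap ℝ (fun C : Matrix (Fin q) (Fin r) ℝ => A * C) :=
    ⟨fun C D => Matrix.mul_add A C D, fun c C => Matrix.mul_smul A c C⟩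
  let φ := LinearMap.toContinuousLinearMap (IsLinearMap.mk' _ hφ)
  have h := (φ.hasFDerivAt (x := f x)).comp_hasDerivAt x hf
  simp [φ, Function.comp_def] at h
  exact h

private lemma matMulRight {p q r : ℕ} (A : Matrix (Fin q) (Fin r) ℝ)
    {f : ℝ → Matrix (Fin p) (Fin q) ℝ} {f' : Matrix (Fin p) (Fin q) ℝ} {x : ℝ}
    (hf : HasDerivAt f f' x) : HasDerivAt (fun t => f t * A) (f' * A) x := by
  have hφ : IsLinearMap ℝ (fun C : Matrix (Fin p) (Fin q) ℝ => C * A) :=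
    ⟨fun C D => Matrix.add_mul C D A, fun c C => Matrix.smul_mul c C A⟩
  let φ := LinearMap.toContinuousLinearMap (IsLinearMap.mk' _ hφ)
  have h := (φ.hasFDerivAt (x := f x)).comp_hasDerivAt x hf
  simp [φ, Function.comp_def] at h
  exact h

private lemma matInv {k : ℕ} {S : ℝ → Matrix (Fin k) (Fin k) ℝ}
    {S' : Matrix (Fin k) (Fin k) ℝ} {x : ℝ} (hS : HasDerivAt S S' x)
    (hU : IsUnit (S x)) :
    HasDerivAt (fun t => (S t)⁻¹) (-((S x)⁻¹ * S' * (S x)⁻¹)) x := by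
  have e : (↑hU.unit⁻¹ : Matrix (Fin k) (Fin k) ℝ) = (S x)⁻¹ := by
    rw [Matrix.coe_units_inv, hU.unit_spec]
  have h := hasFDerivAt_ringInverse (𝕜 := ℝ) hU.unit
  rw [hU.unit_spec] at h
  simp only [e] at h
  have h2 := h.comp_hasDerivAt x hS
  simp only [Function.comp_def, ContinuousLinearMap.neg_apply,
    ContinuousLinearMap.mulLeftRight_apply, ← Matrix.nonsing_inv_eq_ringInverse] at h2
  exact h2

/-- the map `ε ↦ g(B,R,M + εX)` is differentiable at `ε = 0` with derivative
`H(B,R,M) X H(B,R,M)ᵀ`. -/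
theorem g_hasDerivAt {n m : ℕ}
    (B : Matrix (Fin n) (Fin m) ℝ) (R : Matrix (Fin m) (Fin m) ℝ)
    (hR : R.PosDef)
    (M X : Matrix (Fin n) (Fin n) ℝ)
    (hM : M.PosSemidef) (hX : X.PosSemidef) :
    HasDerivAt (fun ε : ℝ => g B R (M + ε • X))
      (H B R M * X * (H B R M)ᵀ) 0 := by
  have hS0posdef : (Bᵀ * M * B + R).PosDef := by
    refine Matrix.PosDef.posSemidef_add ?_ hR
    simpa using hM.conjTranspose_mul_mul_same B
  set K : Matrix (Fin m) (Fin m) ℝ := (Bᵀ * M * B + R)⁻¹ with hK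
  -- symmetry facts
  have hMsymm : Mᵀ = M := by
    have := hM.1
    simpa [Matrix.IsHermitian, Matrix.conjTranspose_eq_transpose_of_trivial] using this
  have hRsymm : Rᵀ = R := by
    have := hR.1
    simpa [Matrix.IsHermitian, Matrix.conjTranspose_eq_transpose_of_trivial] using this
  have hKsymm : Kᵀ = K := by
    rw [hK, Matrix.transpose_nonsing_inv]
    congr 1
    simp [Matrix.transpose_add, Matrix.transpose_mul, hMsymm, hRsymm, Matrix.mul_assoc]
  -- derivative of f
  have hf : HasDerivAt (fun ε : ℝ => M + ε • X) X 0 := by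
    have h := ((hasDerivAt_id (0:ℝ)).smul_const X).const_add M
    simp only [id, one_smul] at h
    exact h
  -- derivative of S
  have hS : HasDerivAt (fun ε : ℝ => Bᵀ * (M + ε • X) * B + R) (Bᵀ * X * B) 0 :=
    (matMulRight B (matMulLeft Bᵀ hf)).add_const R
  have hU : IsUnit (Bᵀ * (M + (0:ℝ) • X) * B + R) := by
    simpa using hS0posdef.isUnit
  -- derivative of the inverse
  have hinv : HasDerivAt (fun ε : ℝ => (Bᵀ * (M + ε • X) * B + R)⁻¹)
      (-(K * (Bᵀ * X * B) * K)) 0 := by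
    have h := matInv hS hU
    simpa [hK] using h
  -- derivative of W = B * S⁻¹ * Bᵀ
  have hW : HasDerivAt (fun ε : ℝ => B * (Bᵀ * (M + ε • X) * B + R)⁻¹ * Bᵀ)
      (B * (-(K * (Bᵀ * X * B) * K)) * Bᵀ) 0 :=
    matMulRight Bᵀ (matMulLeft B hinv)
  -- assemble
  have hG := hf.sub ((hf.mul hW).mul hf)
  have hfn : (fun ε : ℝ => g B R (M + ε • X)) =
      fun ε : ℝ => (M + ε • X) -
        (M + ε • X) * (B * (Bᵀ * (M + ε • X) * B + R)⁻¹ * Bᵀ) * (M + ε • X) := by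
    funext ε
    simp [g, Matrix.mul_assoc]
  rw [hfn]
  refine hG.congr_deriv ?_
  symm
  have hW0 : B * (Bᵀ * (M + (0:ℝ) • X) * B + R)⁻¹ * Bᵀ = B * K * Bᵀ := by
    simp [hK]
  simp only [Pi.mul_apply, zero_smul, add_zero, hW0]
  have hHt : (H B R M)ᵀ = 1 - B * K * Bᵀ * M := by
    simp [H, hK, Matrix.transpose_mul, Matrix.transpose_sub, Matrix.transpose_nonsing_inv,
      Matrix.transpose_add, hMsymm, hRsymm, Matrix.mul_assoc]
  have hH : H B R M = 1 - M * (B * K * Bᵀ) := by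
    simp [H, hK, Matrix.mul_assoc]
  rw [hHt, hH]
  simp only [← hK]
  have hrect : B * -(K * (Bᵀ * X * B) * K) * Bᵀ = -(B * K * Bᵀ * X * (B * K * Bᵀ)) := by
    simp [Matrix.mul_assoc, Matrix.mul_neg, Matrix.neg_mul]
  rw [hrect]
  generalize B * K * Bᵀ = W
  noncomm_ring
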